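/- Fix x_u, x_v ∈ [0,1] with x = d_L(x_u, x_v), let 0 ≤ r_d ≤ r_s with x ≤ r_d and x + r_s + r_d ≤ 1, and let Z_1, …, Z_{m₁} and W_1, …, W_{m₂} be i.i.d. uniform on [0,1]. Then the random count #{i ≤ m₁ : d_L(Z_i, x_u) ≤ r_s and d_L(Z_i, x_v) ≤ r_d} + #{j ≤ m₂ : d_L(W_j, x_u) ≤ r_d and d_L(W_j, x_v) ≤ r_s} has the binomial distribution Bin(m₁ + m₂, min(2r_d, r_s + r_d − x)). In particular, if r_s > 2r_d the success probability equals 2r_d. -/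

import Mathlib

open MeasureTheory Set

/-- The circular distance on `[0,1]`. -/
noncomputable def dL (x y : ℝ) : ℝ := min |x - y| (1 - |x - y|)

/-- The uniform (probability) measure on `[0,1]`. -/
noncomputable def unif : Measure ℝ := volume.restrict (Set.Icc (0 : ℝ) 1)

/-- The binomial probability `Bin(m,p)` of the value `k`. -/
noncomputable def binomPMF (m : ℕ) (p : ℝ) (k : ℕ) : ENNReal :=
  ENNReal.ofReal ((m.choose k : ℝ) * p ^ k * (1 - p) ^ (m - k))

noncomputable def Dd (u : ℝ) : ℝ := |u - round u|

lemma Dd_add_int (u : ℝ) (n : ℤ) : Dd (u + n) = Dd u := by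
  unfold Dd
  rw [round_add_intCast]
  push_cast
  ring_nf

lemma Dd_eq_min (u : ℝ) (h : |u| ≤ 1) : Dd u = min |u| (1 - |u|) := by
  unfold Dd
  rw [abs_le] at h
  rcases lt_or_ge u (-(1/2)) with h1 | h1
  · have hr : round u = -1 := by
      rw [round_eq]
      apply Int.floor_eq_iff.mpr
      constructor <;> push_cast <;> linarith
    rw [hr, abs_of_nonpos (by linarith : u ≤ 0)]
    push_cast
    rw [abs_of_nonneg (by linarith), min_eq_right (by linarith)]
    ring
  · rcases lt_or_ge u (1/2) with h2 | h2
    · have hr : round u = 0 := by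
        rw [round_eq]
        apply Int.floor_eq_iff.mpr
        constructor <;> push_cast <;> linarith
      rw [hr]
      push_cast
      rw [sub_zero, min_eq_left]
      rcases abs_cases u with ⟨he, _⟩ | ⟨he, _⟩ <;> rw [he] <;> linarith
    · have hr : round u = 1 := by
        rw [round_eq]
        apply Int.floor_eq_iff.mpr
        constructor <;> push_cast <;> linarith
      rw [hr, abs_of_nonneg (by linarith : (0:ℝ) ≤ u)]
      push_cast
      rw [abs_of_nonpos (by linarith), min_eq_right (by linarith)]
      ring

lemma fract_preimage_vol (t : ℝ) (s : Set ℝ) (hs : MeasurableSet s) (hs1 : s ⊆ Ico 0 1) :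
    volume ((fun z => Int.fract (z + t)) ⁻¹' s ∩ Ico 0 1) = volume s := by
  set a := Int.fract t with hadef
  have ha0 : 0 ≤ a := Int.fract_nonneg t
  have ha1 : a < 1 := Int.fract_lt_one t
  have hfr : ∀ z : ℝ, Int.fract (z + t) = Int.fract (z + a) := by
    intro z
    rw [show z + t = z + a + (⌊t⌋ : ℝ) by rw [hadef, Int.fract]; ring, Int.fract_add_intCast]
  have key : (fun z => Int.fract (z + t)) ⁻¹' s ∩ Ico 0 1
      = ((fun z => z + a) ⁻¹' (s ∩ Ico a 1)) ∪ ((fun z => z + (a - 1)) ⁻¹' (s ∩ Ico 0 a)) := by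
    ext z
    simp only [Set.mem_inter_iff, Set.mem_preimage, Set.mem_union, Set.mem_Ico]
    constructor
    · rintro ⟨hzs, hz0, hz1⟩
      rw [hfr] at hzs
      rcases lt_or_ge (z + a) 1 with hc | hc
      · left
        rw [Int.fract_eq_self.mpr ⟨by linarith, hc⟩] at hzs
        exact ⟨hzs, by linarith, hc⟩
      · right
        have : Int.fract (z + a) = z + (a - 1) := by
          rw [show z + a = z + (a - 1) + (1 : ℤ) by push_cast; ring, Int.fract_add_intCast,
            Int.fract_eq_self.mpr ⟨by linarith, by linarith⟩]
        rw [this] at hzs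
        exact ⟨hzs, by linarith, by linarith⟩
    · rintro (⟨hzs, hc0, hc1⟩ | ⟨hzs, hc0, hc1⟩)
      · refine ⟨?_, by linarith, by linarith⟩
        rw [hfr, Int.fract_eq_self.mpr ⟨by linarith, hc1⟩]
        exact hzs
      · refine ⟨?_, by linarith, by linarith⟩
        rw [hfr, show z + a = z + (a - 1) + (1 : ℤ) by push_cast; ring, Int.fract_add_intCast,
          Int.fract_eq_self.mpr ⟨by linarith, by linarith⟩]
        exact hzs
  rw [key, measure_union ?_ ?_]
  · rw [measure_preimage_add_right volume a _, measure_preimage_add_right volume (a-1) _]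
    have hsplit : s = (s ∩ Ico a 1) ∪ (s ∩ Ico 0 a) := by
      ext z
      constructor
      · intro hz
        rcases hs1 hz with ⟨h0, h1⟩
        rcases lt_or_ge z a with hc | hc
        · exact Or.inr ⟨hz, h0, hc⟩
        · exact Or.inl ⟨hz, hc, h1⟩
      · rintro (⟨hz, -⟩ | ⟨hz, -⟩) <;> exact hz
    conv_rhs => rw [hsplit]
    rw [measure_union ?_ (hs.inter measurableSet_Ico)]
    rw [Set.disjoint_left]
    rintro z ⟨-, hz1, -⟩ ⟨-, -, hz2⟩
    exact absurd hz1 (not_le.mpr hz2)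
  · rw [Set.disjoint_left]
    rintro z h1 h2
    simp only [Set.mem_preimage, Set.mem_inter_iff, Set.mem_Ico] at h1 h2
    linarith [h1.2.2, h2.2.1]
  · exact (measurable_add_const _) (hs.inter measurableSet_Ico)

lemma Dd_eq_fract (u : ℝ) : Dd u = |Int.fract (u + 1/2) - 1/2| := by
  unfold Dd
  rw [round_eq, Int.fract]
  ring_nf

lemma measurable_Dd : Measurable Dd := by
  have : Dd = fun u => |Int.fract (u + 1/2) - 1/2| := funext Dd_eq_fract
  rw [this]
  exact ((measurable_fract.comp (measurable_add_const _)).sub_const _).abs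

lemma dL_eq_Dd {x y : ℝ} (hx : x ∈ Icc (0:ℝ) 1) (hy : y ∈ Icc (0:ℝ) 1) :
    dL x y = Dd (x - y) := by
  rw [Dd_eq_min _ (abs_le.mpr ⟨by linarith [hx.1, hy.2], by linarith [hx.2, hy.1]⟩)]
  rfl

lemma vol_slab (rs rd x γ : ℝ) (hx0 : 0 ≤ x) (hxrd : x ≤ rd) (hrsd : rd ≤ rs)
    (h1 : x + rs + rd ≤ 1) (hγ : γ = x ∨ γ = -x) :
    volume ({w | w ≤ 2*rs ∧ Dd (w - (rs + γ)) ≤ rd} ∩ Ico 0 1)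
      = ENNReal.ofReal (min (2*rd) (rs + rd - x)) := by
  have hrd0 : 0 ≤ rd := le_trans hx0 hxrd
  set c := rs + γ with hc
  have hrs1 : rs ≤ 1 := by linarith
  have hc0 : 0 ≤ c := by rcases hγ with h | h <;> rw [hc, h] <;> linarith
  have hcrd1 : c + rd ≤ 1 := by rcases hγ with h | h <;> rw [hc, h] <;> linarith
  have h2rs : 2*rs ≤ 1 + c - rd := by rcases hγ with h | h <;> rw [hc, h] <;> linarith
  set L := max 0 (c - rd) with hL
  set U := min (2*rs) (c + rd) with hU
  have hlower : Ico L U ⊆ {w | w ≤ 2*rs ∧ Dd (w - c) ≤ rd} ∩ Ico 0 1 := by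
    rintro w ⟨hwL, hwU⟩
    have hw0 : 0 ≤ w := le_trans (le_max_left _ _) hwL
    have hw2rs : w ≤ 2*rs := le_of_lt (lt_of_lt_of_le hwU (min_le_left _ _))
    have hwcrd : w < c + rd := lt_of_lt_of_le hwU (min_le_right _ _)
    have hw1 : w < 1 := lt_of_lt_of_le hwcrd hcrd1
    refine ⟨⟨hw2rs, ?_⟩, hw0, hw1⟩
    have hwc : |w - c| ≤ rd := by
      rw [abs_le]
      exact ⟨by linarith [le_trans (le_max_right _ _) hwL], by linarith⟩
    rw [Dd_eq_min _ (by rw [abs_le]; constructor <;> linarith)]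
    exact le_trans (min_le_left _ _) hwc
  have hupper : {w | w ≤ 2*rs ∧ Dd (w - c) ≤ rd} ∩ Ico 0 1
      ⊆ (Icc L U ∪ {0}) ∪ {1 + c - rd} := by
    rintro w ⟨⟨hw2rs, hwD⟩, hw0, hw1⟩
    rw [Dd_eq_min _ (by rw [abs_le]; constructor <;> linarith)] at hwD
    rcases min_le_iff.mp hwD with hcase | hcase
    · rcases abs_le.mp hcase with ⟨hl, hr⟩
      exact Or.inl (Or.inl ⟨max_le hw0 (by linarith), le_min hw2rs (by linarith)⟩)
    · rcases abs_cases (w - c) with ⟨he, _⟩ | ⟨he, _⟩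
      · right
        have : w ≥ 1 + c - rd := by rw [he] at hcase; linarith
        have : w = 1 + c - rd := le_antisymm (by linarith) this
        simp [this]
      · left; right
        have : w ≤ c - 1 + rd := by rw [he] at hcase; linarith
        have : w = 0 := le_antisymm (by linarith) hw0
        simp [this]
  have hUL : U - L = min (2*rd) (rs + rd - x) := by
    rcases hγ with h | h <;> rcases le_total rs (x + rd) with h2 | h2
    · rw [hU, hL, hc, h, min_eq_left (by linarith), max_eq_right (by linarith),
        min_eq_right (by linarith)]
      ring
    · rw [hU, hL, hc, h, min_eq_right (by linarith), max_eq_right (by linarith),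
        min_eq_left (by linarith)]
      ring
    · rw [hU, hL, hc, h, min_eq_right (by linarith), max_eq_left (by linarith),
        min_eq_right (by linarith)]
      ring
    · rw [hU, hL, hc, h, min_eq_right (by linarith), max_eq_right (by linarith),
        min_eq_left (by linarith)]
      ring
  rw [← hUL]
  refine le_antisymm ?_ ?_
  · refine le_trans (measure_mono hupper) ?_
    refine le_trans (measure_union_le _ _) ?_
    refine le_trans (add_le_add_left (measure_union_le _ _) _) ?_
    rw [Real.volume_singleton, Real.volume_singleton, Real.volume_Icc, add_zero, add_zero]
  · rw [← Real.volume_Ico]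
    exact measure_mono hlower

lemma Dd_cond1 (rs w : ℝ) (hrs0 : 0 ≤ rs) (hrs1 : rs ≤ 1) (hw : w ∈ Ico (0:ℝ) 1) :
    Dd (w - rs) ≤ rs ↔ w ≤ 2*rs := by
  rw [Dd_eq_min _ (abs_le.mpr ⟨by linarith [hw.1], by linarith [hw.2]⟩)]
  constructor
  · intro h
    rcases min_le_iff.mp h with h | h
    · linarith [le_abs_self (w - rs), abs_le.mp h]
    · rcases abs_cases (w - rs) with ⟨he, _⟩ | ⟨he, _⟩ <;> rw [he] at h <;>
        linarith [hw.2, hw.1]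
  · intro h
    exact le_trans (min_le_left _ _) (abs_le.mpr ⟨by linarith [hw.1], by linarith⟩)

lemma arc_measure (c₁ c₂ rs rd : ℝ) (hc₁ : c₁ ∈ Icc (0:ℝ) 1) (hc₂ : c₂ ∈ Icc (0:ℝ) 1)
    (hrd : 0 ≤ rd) (hrsd : rd ≤ rs) (hx : dL c₁ c₂ ≤ rd) (hx1 : dL c₁ c₂ + rs + rd ≤ 1) :
    unif {z | dL z c₁ ≤ rs ∧ dL z c₂ ≤ rd}
      = ENNReal.ofReal (min (2*rd) (rs + rd - dL c₁ c₂)) := by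
  set x := dL c₁ c₂ with hxdef
  have habs : |c₁ - c₂| ≤ 1 :=
    abs_le.mpr ⟨by linarith [hc₁.1, hc₂.2], by linarith [hc₁.2, hc₂.1]⟩
  have hx0 : 0 ≤ x := le_min (abs_nonneg _) (by linarith)
  have hrs0 : 0 ≤ rs := le_trans hrd hrsd
  have hrs1 : rs ≤ 1 := by linarith
  set t := rs - c₁ with ht
  -- reduce the second center modulo 1
  obtain ⟨γ, hγ1, hγ2⟩ : ∃ γ, (γ = x ∨ γ = -x) ∧
      ∀ w : ℝ, Dd (w - (c₂ + t)) = Dd (w - (rs + γ)) := by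
    have habs2 : |c₁ - c₂| = x ∨ |c₁ - c₂| = 1 - x := by
      rcases min_cases |c₁ - c₂| (1 - |c₁ - c₂|) with ⟨h, -⟩ | ⟨h, -⟩
      · exact Or.inl h.symm
      · right; rw [hxdef]; unfold dL; rw [h]; ring
    rcases habs2 with h | h
    · rcases abs_cases (c₁ - c₂) with ⟨he, -⟩ | ⟨he, -⟩
      · refine ⟨-x, Or.inr rfl, fun w => ?_⟩
        have : c₂ + t = rs + -x := by rw [ht]; linarith [he ▸ h]
        rw [this]
      · refine ⟨x, Or.inl rfl, fun w => ?_⟩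
        have : c₂ + t = rs + x := by rw [ht]; linarith [he ▸ h]
        rw [this]
    · rcases abs_cases (c₁ - c₂) with ⟨he, -⟩ | ⟨he, -⟩
      · refine ⟨x, Or.inl rfl, fun w => ?_⟩
        have hc2t : c₂ + t = rs + x - 1 := by rw [ht]; linarith [he ▸ h]
        rw [hc2t, show w - (rs + x - 1) = w - (rs + x) + ((1 : ℤ) : ℝ) by push_cast; ring,
          Dd_add_int]
      · refine ⟨-x, Or.inr rfl, fun w => ?_⟩
        have hc2t : c₂ + t = rs + -x + 1 := by rw [ht]; linarith [he ▸ h]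
        rw [hc2t, show w - (rs + -x + 1) = w - (rs + -x) + ((-1 : ℤ) : ℝ) by push_cast; ring,
          Dd_add_int]
  have hSm : MeasurableSet {z | dL z c₁ ≤ rs ∧ dL z c₂ ≤ rd} := by
    have hdLm : ∀ c : ℝ, Measurable (fun z => dL z c) := fun c =>
      ((measurable_id.sub_const c).abs).min (measurable_const.sub (measurable_id.sub_const c).abs)
    exact (measurableSet_le (hdLm c₁) measurable_const).inter
      (measurableSet_le (hdLm c₂) measurable_const)
  have hunif : unif {z | dL z c₁ ≤ rs ∧ dL z c₂ ≤ rd}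
      = volume ({z | dL z c₁ ≤ rs ∧ dL z c₂ ≤ rd} ∩ Ico 0 1) := by
    rw [show unif = volume.restrict (Icc 0 1) from rfl,
      ← Measure.restrict_congr_set Ico_ae_eq_Icc, Measure.restrict_apply hSm]
  rw [hunif]
  have e1 : ∀ z ∈ Ico (0:ℝ) 1, Dd (Int.fract (z + t) - rs) = dL z c₁ := by
    intro z hz
    rw [dL_eq_Dd ⟨hz.1, le_of_lt hz.2⟩ hc₁,
      show Int.fract (z + t) - rs = z - c₁ + ((-⌊z + t⌋ : ℤ) : ℝ) by
        rw [Int.fract, ht]; push_cast; ring,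
      Dd_add_int]
  have e2 : ∀ z ∈ Ico (0:ℝ) 1, Dd (Int.fract (z + t) - (rs + γ)) = dL z c₂ := by
    intro z hz
    rw [← hγ2, dL_eq_Dd ⟨hz.1, le_of_lt hz.2⟩ hc₂,
      show Int.fract (z + t) - (c₂ + t) = z - c₂ + ((-⌊z + t⌋ : ℤ) : ℝ) by
        rw [Int.fract]; push_cast; ring,
      Dd_add_int]
  have hkey : {z | dL z c₁ ≤ rs ∧ dL z c₂ ≤ rd} ∩ Ico 0 1
      = (fun z => Int.fract (z + t)) ⁻¹'
          ({w | w ≤ 2*rs ∧ Dd (w - (rs + γ)) ≤ rd} ∩ Ico 0 1) ∩ Ico 0 1 := by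
    ext z
    simp only [Set.mem_inter_iff, Set.mem_preimage, Set.mem_setOf_eq]
    constructor
    · rintro ⟨⟨h1, h2⟩, hz⟩
      have hw : Int.fract (z + t) ∈ Ico (0:ℝ) 1 :=
        ⟨Int.fract_nonneg _, Int.fract_lt_one _⟩
      refine ⟨⟨⟨(Dd_cond1 rs _ hrs0 hrs1 hw).mp (by rw [e1 z hz]; exact h1), ?_⟩, hw⟩, hz⟩
      rw [e2 z hz]; exact h2
    · rintro ⟨⟨⟨h1, h2⟩, hw⟩, hz⟩
      refine ⟨⟨?_, by rw [← e2 z hz]; exact h2⟩, hz⟩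
      rw [← e1 z hz]
      exact (Dd_cond1 rs _ hrs0 hrs1 hw).mpr h1
  have hm2 : MeasurableSet ({w : ℝ | w ≤ 2*rs ∧ Dd (w - (rs + γ)) ≤ rd} ∩ Ico 0 1) := by
    refine MeasurableSet.inter ?_ measurableSet_Ico
    exact (measurableSet_le measurable_id measurable_const).inter
      (measurableSet_le (measurable_Dd.comp (measurable_id.sub_const _)) measurable_const)
  rw [hkey, fract_preimage_vol t _ hm2 Set.inter_subset_right]
  exact vol_slab rs rd x γ hx0 hx hrsd hx1 hγ1

lemma pi_count_binom {ι : Type*} [Fintype ι] [DecidableEq ι]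
    (μ : ι → Measure ℝ) [∀ i, IsProbabilityMeasure (μ i)]
    (P : ι → ℝ → Prop) [∀ i z, Decidable (P i z)]
    (hA : ∀ i, MeasurableSet {z | P i z}) (a : ENNReal)
    (ha : ∀ i, μ i {z | P i z} = a) (k : ℕ) :
    Measure.pi μ {ω | (Finset.univ.filter fun i => P i (ω i)).card = k}
      = ((Fintype.card ι).choose k : ENNReal) * a ^ k * (1 - a) ^ (Fintype.card ι - k) := by
  classical
  have hdecomp : {ω : (i : ι) → ℝ | (Finset.univ.filter fun i => P i (ω i)).card = k}
      = ⋃ S ∈ Finset.powersetCard k (Finset.univ : Finset ι),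
          Set.pi Set.univ (fun i => if i ∈ S then {z | P i z} else {z | P i z}ᶜ) := by
    ext ω
    simp only [Set.mem_setOf_eq, Set.mem_iUnion, Finset.mem_powersetCard,
      Set.mem_pi, Set.mem_univ, forall_true_left]
    constructor
    · intro h
      refine ⟨Finset.univ.filter fun i => P i (ω i), ⟨Finset.subset_univ _, h⟩, fun i => ?_⟩
      by_cases hi : P i (ω i) <;> simp [hi]
    · rintro ⟨S, ⟨-, hS⟩, h⟩
      have : (Finset.univ.filter fun i => P i (ω i)) = S := by
        ext i
        specialize h i
        by_cases hi : i ∈ S <;> simp_all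
      rw [this, hS]
  rw [hdecomp]
  have hmeas : ∀ S : Finset ι, MeasurableSet
      (Set.pi Set.univ (fun i => if i ∈ S then {z | P i z} else {z | P i z}ᶜ)) := by
    intro S
    refine MeasurableSet.univ_pi fun i => ?_
    by_cases hi : i ∈ S <;> simp [hi, hA i, (hA i).compl]
  rw [measure_biUnion_finset ?_ fun S _ => hmeas S]
  · have hval : ∀ S ∈ Finset.powersetCard k (Finset.univ : Finset ι),
        Measure.pi μ (Set.pi Set.univ (fun i => if i ∈ S then {z | P i z} else {z | P i z}ᶜ))
          = a ^ k * (1 - a) ^ (Fintype.card ι - k) := by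
      intro S hS
      rw [Finset.mem_powersetCard] at hS
      rw [Measure.pi_pi]
      have : ∀ i : ι, μ i (if i ∈ S then {z | P i z} else {z | P i z}ᶜ)
          = if i ∈ S then a else 1 - a := by
        intro i
        by_cases hi : i ∈ S <;>
          simp [hi, ha i, prob_compl_eq_one_sub (hA i)]
      simp_rw [this]
      have h1 : Finset.univ.filter (fun x => x ∈ S) = S := by ext x; simp
      rw [Finset.prod_ite, Finset.prod_const, Finset.prod_const, h1, hS.2,
        Finset.filter_not, h1, Finset.card_sdiff_of_subset (Finset.subset_univ S),
        Finset.card_univ, hS.2]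
    rw [Finset.sum_congr rfl hval, Finset.sum_const, Finset.card_powersetCard,
      Finset.card_univ, nsmul_eq_mul, mul_assoc]
  · intro S hS T hT hST
    simp only [Function.onFun]
    rw [Set.disjoint_left]
    intro ω hω hω'
    simp only [Set.mem_pi, Set.mem_univ, forall_true_left] at hω hω'
    apply hST
    ext i
    specialize hω i; specialize hω' i
    by_cases hi : i ∈ S <;> by_cases hi' : i ∈ T <;> simp_all

instance : IsProbabilityMeasure unif := by
  constructor
  rw [show unif = volume.restrict (Icc 0 1) from rfl, Measure.restrict_apply_univ,
    Real.volume_Icc]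
  norm_num

lemma dL_comm (x y : ℝ) : dL x y = dL y x := by
  unfold dL; rw [abs_sub_comm]

lemma binomPMF_eq (m k : ℕ) (p : ℝ) (hp0 : 0 ≤ p) (hp1 : p ≤ 1) :
    ((m.choose k : ENNReal)) * ENNReal.ofReal p ^ k
      * (1 - ENNReal.ofReal p) ^ (m - k) = binomPMF m p k := by
  have h1 : (1 : ENNReal) - ENNReal.ofReal p = ENNReal.ofReal (1 - p) := by
    rw [← ENNReal.ofReal_one, ← ENNReal.ofReal_sub _ hp0]
  rw [h1, ← ENNReal.ofReal_pow hp0, ← ENNReal.ofReal_pow (by linarith),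
    ← ENNReal.ofReal_natCast, ← ENNReal.ofReal_mul (by positivity),
    ← ENNReal.ofReal_mul (by positivity)]
  rfl


/-- Lemma 3 of the paper: for two different-cluster vertices at
circular distance `x ≤ r_d` with `x + r_s + r_d ≤ 1`, the total number of common
neighbors among the `m₁ + m₂` other points is
`Bin(m₁ + m₂, min(2r_d, r_s + r_d − x))`-distributed; if `r_s > 2r_d` the success
probability equals `2r_d`. -/
theorem gbm_common_neighbor_count_diff (xu xv rs rd : ℝ) (m₁ m₂ : ℕ)
    (hxu : xu ∈ Set.Icc (0 : ℝ) 1) (hxv : xv ∈ Set.Icc (0 : ℝ) 1)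
    (hrd : 0 ≤ rd) (hrsd : rd ≤ rs)
    (hx : dL xu xv ≤ rd) (hx1 : dL xu xv + rs + rd ≤ 1) :
    (∀ k : ℕ,
      ((Measure.pi fun _ : Fin m₁ => unif).prod (Measure.pi fun _ : Fin m₂ => unif))
        {ω | (Finset.univ.filter fun i : Fin m₁ =>
                dL (ω.1 i) xu ≤ rs ∧ dL (ω.1 i) xv ≤ rd).card
            + (Finset.univ.filter fun j : Fin m₂ =>
                dL (ω.2 j) xu ≤ rd ∧ dL (ω.2 j) xv ≤ rs).card = k}
        = binomPMF (m₁ + m₂) (min (2 * rd) (rs + rd - dL xu xv)) k) ∧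
    (2 * rd < rs → min (2 * rd) (rs + rd - dL xu xv) = 2 * rd) := by
  classical
  have habs : |xu - xv| ≤ 1 :=
    abs_le.mpr ⟨by linarith [hxu.1, hxv.2], by linarith [hxu.2, hxv.1]⟩
  have hx0 : 0 ≤ dL xu xv := le_min (abs_nonneg _) (by linarith)
  set p := min (2 * rd) (rs + rd - dL xu xv) with hp
  have hp0 : 0 ≤ p := le_min (by linarith) (by linarith)
  have hp1 : p ≤ 1 := le_trans (min_le_right _ _) (by linarith)
  constructor
  · intro k
    set P : (Fin m₁ ⊕ Fin m₂) → ℝ → Prop :=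
      Sum.elim (fun _ z => dL z xu ≤ rs ∧ dL z xv ≤ rd)
        (fun _ z => dL z xu ≤ rd ∧ dL z xv ≤ rs) with hP
    have hdLm : ∀ c : ℝ, Measurable (fun z => dL z c) := fun c =>
      ((measurable_id.sub_const c).abs).min (measurable_const.sub (measurable_id.sub_const c).abs)
    have hPm : ∀ i, MeasurableSet {z | P i z} := by
      rintro (i | j) <;>
        exact (measurableSet_le (hdLm _) measurable_const).inter
          (measurableSet_le (hdLm _) measurable_const)
    have hPa : ∀ i, unif {z | P i z} = ENNReal.ofReal p := by
      rintro (i | j)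
      · exact arc_measure xu xv rs rd hxu hxv hrd hrsd hx hx1
      · have h1 : {z | P (Sum.inr j) z} = {z | dL z xv ≤ rs ∧ dL z xu ≤ rd} := by
          ext z; exact and_comm
        have h2 := arc_measure xv xu rs rd hxv hxu hrd hrsd
          (by rwa [dL_comm xv xu]) (by rwa [dL_comm xv xu])
        rw [h1, h2, dL_comm xv xu]
    set s : Set ((Fin m₁ ⊕ Fin m₂) → ℝ) :=
      {η | (Finset.univ.filter fun i => P i (η i)).card = k} with hs
    have hsm : MeasurableSet s := by
      have hf : Measurable fun η : (Fin m₁ ⊕ Fin m₂) → ℝ =>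
          (Finset.univ.filter fun i => P i (η i)).card := by
        simp only [Finset.card_filter]
        refine Finset.measurable_sum _ fun i _ => Measurable.ite ?_ measurable_const
          measurable_const
        exact (measurable_pi_apply i) (hPm i)
      exact hf (measurableSet_singleton k)
    set e := MeasurableEquiv.sumPiEquivProdPi (fun _ : Fin m₁ ⊕ Fin m₂ => ℝ) with he
    have hmp := measurePreserving_sumPiEquivProdPi_symm (fun _ : Fin m₁ ⊕ Fin m₂ => unif)
    have hset : {ω : (Fin m₁ → ℝ) × (Fin m₂ → ℝ) |
          (Finset.univ.filter fun i : Fin m₁ =>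
              dL (ω.1 i) xu ≤ rs ∧ dL (ω.1 i) xv ≤ rd).card
        + (Finset.univ.filter fun j : Fin m₂ =>
              dL (ω.2 j) xu ≤ rd ∧ dL (ω.2 j) xv ≤ rs).card = k}
        = e.symm ⁻¹' s := by
      ext ω
      simp only [Set.mem_preimage, Set.mem_setOf_eq, hs]
      have hcount : (Finset.univ.filter fun i => P i (e.symm ω i)).card
          = (Finset.univ.filter fun i : Fin m₁ =>
              dL (ω.1 i) xu ≤ rs ∧ dL (ω.1 i) xv ≤ rd).card
          + (Finset.univ.filter fun j : Fin m₂ =>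
              dL (ω.2 j) xu ≤ rd ∧ dL (ω.2 j) xv ≤ rs).card := by
        simp only [Finset.card_filter]
        rw [Fintype.sum_sum_type]
        simp only [he, MeasurableEquiv.coe_sumPiEquivProdPi_symm,
          Equiv.sumPiEquivProdPi_symm_apply, hP, Sum.elim_inl, Sum.elim_inr]
      rw [hcount]
    rw [hset, hmp.measure_preimage hsm.nullMeasurableSet]
    have := pi_count_binom (fun _ : Fin m₁ ⊕ Fin m₂ => unif) P hPm (ENNReal.ofReal p) hPa k
    rw [hs, this, Fintype.card_sum, Fintype.card_fin, Fintype.card_fin]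
    exact binomPMF_eq (m₁ + m₂) k p hp0 hp1
  · intro h
    exact min_eq_left (by rw [hp] at *; linarith [min_le_right (2*rd) (rs + rd - dL xu xv)])
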